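/- arXiv:2601.14618 — 2 statements merged into one kernel-verified Lean document; each statement's English description precedes it below -/
import Mathlib

section
/- Let G be a finite solvable group acting primitively and faithfully on a finite set Ω of size n, so that G has a unique minimal normal subgroup V, which is an elementary abelian p-group for some prime p and acts regularly on Ω (hence n = |V|). Let g ∈ G with g ≠ 1, let n(g) be the number of cycles of g on Ω (the number of orbits of ⟨g⟩ on Ω), let s(g) be the number of fixed points of g on Ω, and let o(g) be the order of g. Then: (i) 2·n(g) ≤ n + s(g); (ii) o(g)·p·n(g) ≤ (p + o(g) − 1)·n; and (iii) 4·n(g) ≤ 3·n. -/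
open MulAction Pointwise

/-- A group action is preprimitive if it is transitive and every block is trivial
(a subsingleton or the whole set). -/
def IsPreprimitive (G X : Type*) [Group G] [MulAction G X] : Prop :=
  MulAction.IsPretransitive G X ∧
    ∀ B : Set X, MulAction.IsBlock G B → B.Subsingleton ∨ B = Set.univ

theorem stmt3_nat_card_sigma {ι : Type*} [Fintype ι] {f : ι → Type*} [∀ i, Finite (f i)] :
    Nat.card (Σ i, f i) = ∑ i, Nat.card (f i) := by
  letI : ∀ i, Fintype (f i) := fun i => Fintype.ofFinite _
  simp [Nat.card_eq_fintype_card, Fintype.card_sigma]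

/-- Purely combinatorial bound: twice the number of cycles of `g` is at most the number of
points plus the number of fixed points. -/
theorem stmt3_two_mul_card_orbits_le {G Ω : Type*} [Group G] [Finite Ω] [MulAction G Ω] (g : G) :
    2 * Nat.card (orbitRel.Quotient (Subgroup.zpowers g) Ω) ≤
      Nat.card Ω + Nat.card {ω : Ω | g • ω = ω} := by
  classical
  set H := Subgroup.zpowers g with hH
  letI : Fintype Ω := Fintype.ofFinite Ω
  letI : Fintype (orbitRel.Quotient H Ω) := Fintype.ofFinite _
  set Q := orbitRel.Quotient H Ω with hQ
  have hcard : Nat.card Ω = ∑ q : Q, Nat.card q.orbit := by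
    rw [Nat.card_congr (selfEquivSigmaOrbits' H Ω), stmt3_nat_card_sigma]
  have horb_fix : ∀ (ω : Ω), g • ω = ω → MulAction.orbit H ω = {ω} := by
    intro ω hω
    apply Set.eq_singleton_iff_unique_mem.mpr
    refine ⟨MulAction.mem_orbit_self ω, ?_⟩
    rintro x ⟨h, rfl⟩
    obtain ⟨k, hk⟩ := h.2
    show (h : G) • ω = ω
    rw [← hk]
    exact fixedBy_subset_fixedBy_zpow Ω g k hω
  have hfix : Nat.card {ω : Ω | g • ω = ω} =
      Nat.card {q : Q // Nat.card q.orbit = 1} := by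
    apply Nat.card_eq_of_bijective
      (fun x => ⟨Quotient.mk'' x.1, by
        rw [orbitRel.Quotient.orbit_mk, horb_fix x.1 x.2]; simp⟩)
    constructor
    · rintro ⟨a, ha⟩ ⟨b, hb⟩ hab
      simp only [Subtype.mk.injEq] at hab ⊢
      have : b ∈ MulAction.orbit H a := by
        rw [← orbitRel.Quotient.orbit_mk (G := H) a, hab]
        exact orbitRel.Quotient.mem_orbit.mpr rfl
      rw [horb_fix a ha] at this
      exact this.symm
    · rintro ⟨q, hq⟩
      have h1 : q.orbit.ncard = 1 := by rw [← Nat.card_coe_set_eq]; exact hq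
      obtain ⟨ω, hω⟩ := Set.ncard_eq_one.mp h1
      have hmem : ω ∈ q.orbit := by rw [hω]; rfl
      have hmk : Quotient.mk'' ω = q := orbitRel.Quotient.mem_orbit.mp hmem
      have hfixω : g • ω = ω := by
        have : g • ω ∈ q.orbit := by
          rw [← hmk, orbitRel.Quotient.orbit_mk]
          exact ⟨⟨g, Subgroup.mem_zpowers g⟩, rfl⟩
        rw [hω] at this
        exact this
      exact ⟨⟨ω, hfixω⟩, by simp [hmk]⟩
  have hsub : Nat.card {q : Q // Nat.card q.orbit = 1} =
      (Finset.univ.filter fun q : Q => Nat.card q.orbit = 1).card := by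
    rw [Nat.card_eq_fintype_card, Fintype.card_subtype]
  rw [hcard, hfix, hsub, Nat.card_eq_fintype_card (α := Q)]
  rw [Finset.card_filter, ← Finset.sum_add_distrib, Fintype.card,
    Finset.card_eq_sum_ones Finset.univ, Finset.mul_sum]
  apply Finset.sum_le_sum
  intro q _
  have hpos : 0 < Nat.card q.orbit := by
    have : q.orbit.Nonempty := by
      induction q using Quotient.inductionOn' with
      | h a => exact ⟨a, orbitRel.Quotient.mem_orbit.mpr rfl⟩
    have : Nonempty q.orbit := this.to_subtype
    exact Nat.card_pos
  by_cases h1 : Nat.card q.orbit = 1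
  · rw [if_pos h1, h1]; omega
  · rw [if_neg h1]; omega

/-- A nontrivial element of `G` fixes at most `|Ω| / p` points. -/
theorem stmt3_fix_bound {G Ω : Type*} [Group G] [Finite G] [Finite Ω] [MulAction G Ω]
    [FaithfulSMul G Ω]
    (p : ℕ) (hp : p.Prime) (V : Subgroup G) [V.Normal]
    (hVelem : ∀ x : V, x ^ p = 1)
    (hVtrans : MulAction.IsPretransitive V Ω)
    (hVfree : ∀ (v : V) (ω : Ω), v • ω = ω → v = 1)
    (h : G) (hh : h ≠ 1) :
    p * Nat.card {ω : Ω | h • ω = ω} ≤ Nat.card Ω := by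
  classical
  rcases Set.eq_empty_or_nonempty {ω : Ω | h • ω = ω} with hfe | ⟨ω₀, hω₀⟩
  · rw [hfe]; simp
  have hω₀ : h • ω₀ = ω₀ := hω₀
  have hinj : ∀ v w : V, (v : G) • ω₀ = (w : G) • ω₀ → v = w := by
    intro v w hvw
    have hvw' : (w⁻¹ * v) • ω₀ = ω₀ := by
      rw [mul_smul]
      show (w : G)⁻¹ • (v : G) • ω₀ = ω₀
      rw [hvw, ← mul_smul, inv_mul_cancel, one_smul]
    have := hVfree _ _ hvw'
    rwa [inv_mul_eq_one, eq_comm] at this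
  have hcardV : Nat.card Ω = Nat.card V := by
    refine (Nat.card_eq_of_bijective (fun v : V => (v : G) • ω₀) ⟨?_, ?_⟩).symm
    · intro v w hvw; exact hinj v w hvw
    · intro ω; obtain ⟨v, hv⟩ := hVtrans.exists_smul_eq ω₀ ω; exact ⟨v, hv⟩
  set K : Subgroup G := Subgroup.centralizer {h} ⊓ V with hK
  have hmem : ∀ k : K, h • ((k : G) • ω₀) = (k : G) • ω₀ := by
    intro k
    rw [← mul_smul, (Subgroup.mem_centralizer_iff.mp k.2.1 h rfl : h * k = k * h),
      mul_smul, hω₀]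
  have hfixK : Nat.card {ω : Ω | h • ω = ω} = Nat.card K := by
    refine (Nat.card_eq_of_bijective
      (fun k : K => ⟨(k : G) • ω₀, hmem k⟩) ⟨?_, ?_⟩).symm
    · rintro ⟨a, ha⟩ ⟨b, hb⟩ hab
      simp only [Subtype.mk.injEq] at hab ⊢
      exact Subtype.ext_iff.mp (hinj ⟨a, ha.2⟩ ⟨b, hb.2⟩ hab)
    · rintro ⟨ω, hω⟩
      obtain ⟨v, hv⟩ := hVtrans.exists_smul_eq ω₀ ω
      have hv' : (v : G) • ω₀ = ω := hv
      have hω' : h • ω = ω := hω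
      have hw1 : h⁻¹ * (v : G)⁻¹ * h ∈ V := by
        simpa [mul_assoc] using ‹V.Normal›.conj_mem _ (V.inv_mem v.2) h⁻¹
      have hWmem : h⁻¹ * (v : G)⁻¹ * h * v ∈ V := V.mul_mem hw1 v.2
      have hfx : (⟨_, hWmem⟩ : V) • ω₀ = ω₀ := by
        show (h⁻¹ * (v : G)⁻¹ * h * v) • ω₀ = ω₀
        have h1 : (h * v) • ω₀ = (v : G) • ω₀ := by
          rw [mul_smul, hv']; exact hω
        calc (h⁻¹ * (v : G)⁻¹ * h * v) • ω₀ = (h⁻¹ * (v:G)⁻¹) • (h * v) • ω₀ := by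
              rw [← mul_smul]; group
          _ = (h⁻¹ * (v:G)⁻¹) • (v : G) • ω₀ := by rw [h1]
          _ = h⁻¹ • ((v:G)⁻¹ * v) • ω₀ := by rw [← mul_smul, ← mul_smul]; group
          _ = ω₀ := by rw [inv_mul_cancel, one_smul, inv_smul_eq_iff, hω₀]
      have hone : h⁻¹ * (v : G)⁻¹ * h * v = 1 := Subtype.ext_iff.mp (hVfree _ _ hfx)
      have e1 : (v : G)⁻¹ * h * v = h := by
        have := congrArg (h * ·) hone
        simpa [mul_assoc] using this
      have hcomm : h * v = v * h := by
        have := congrArg ((v : G) * ·) e1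
        simpa [mul_assoc] using this
      refine ⟨⟨v, ⟨Subgroup.mem_centralizer_iff.mpr ?_, v.2⟩⟩, Subtype.ext hv'⟩
      rintro y rfl
      exact hcomm
  have hKleV : K ≤ V := inf_le_right
  have hKneV : K ≠ V := by
    intro hEq
    apply hh
    apply eq_of_smul_eq_smul (M := G) (α := Ω)
    intro ω
    obtain ⟨v, hv⟩ := hVtrans.exists_smul_eq ω₀ ω
    have hvK : (v : G) ∈ K := by rw [hEq]; exact v.2
    have hcomm : h * v = v * h := Subgroup.mem_centralizer_iff.mp hvK.1 h rfl
    show h • ω = 1 • ω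
    rw [one_smul, ← hv]
    show h • (v : G) • ω₀ = (v : G) • ω₀
    rw [← mul_smul, hcomm, mul_smul, hω₀]
  haveI : Fact p.Prime := ⟨hp⟩
  have hpg : IsPGroup p V := fun x => ⟨1, by simpa using hVelem x⟩
  obtain ⟨a, hA⟩ := hpg.exists_card_eq
  have hdvd : Nat.card K ∣ p ^ a := hA ▸ Subgroup.card_dvd_of_le hKleV
  have hlt : Nat.card K < Nat.card V := by
    have hss : (K : Set G) ⊂ (V : Set G) :=
      SetLike.coe_ssubset_coe.mpr (lt_of_le_of_ne hKleV hKneV)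
    have := Set.ncard_lt_ncard hss (Set.toFinite _)
    rw [← Nat.card_coe_set_eq, ← Nat.card_coe_set_eq] at this
    exact this
  obtain ⟨b, hble, hKb⟩ := (Nat.dvd_prime_pow hp).mp hdvd
  have hba : b < a := by
    by_contra hcon
    have : b = a := le_antisymm hble (not_lt.mp hcon)
    rw [hKb, this, ← hA] at hlt
    exact lt_irrefl _ hlt
  rw [hfixK, hcardV, hA, hKb, ← pow_succ']
  exact Nat.pow_le_pow_right hp.pos hba

theorem stmt3_arith (o p : ℕ) (ho : 2 ≤ o) (hp : 2 ≤ p) :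
    4 * (p + o - 1) ≤ 3 * (o * p) := by
  obtain ⟨a, rfl⟩ := Nat.exists_eq_add_of_le ho
  obtain ⟨b, rfl⟩ := Nat.exists_eq_add_of_le hp
  have h1 : (2 + b) + (2 + a) - 1 = 3 + a + b := by omega
  rw [h1]
  nlinarith [Nat.zero_le (a * b)]

/-- Let `G` be a finite solvable group acting primitively and faithfully on a
finite set `Ω` of size `n`, so that `G` has a unique minimal normal subgroup `V`, which is an
elementary abelian `p`-group for some prime `p` and acts regularly on `Ω` (hence `n = |V|`).
Let `g ∈ G` with `g ≠ 1`, `n(g)` the number of cycles of `g` on `Ω` (orbits of `⟨g⟩`), `s(g)`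
the number of fixed points of `g`, and `o(g)` the order of `g`. Then
(i) `2·n(g) ≤ n + s(g)`; (ii) `o(g)·p·n(g) ≤ (p + o(g) − 1)·n`; (iii) `4·n(g) ≤ 3·n`. -/
theorem stmt_3 {G Ω : Type*} [Group G] [Finite G] [Finite Ω] [MulAction G Ω]
    [FaithfulSMul G Ω]
    (hsolv : IsSolvable G) (hprim : _root_.IsPreprimitive G Ω)
    (n : ℕ) (hn : n = Nat.card Ω)
    (p : ℕ) (hp : p.Prime)
    (V : Subgroup G) [V.Normal] (hVnt : V ≠ ⊥)
    -- `V` is the unique minimal normal subgroup of `G`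
    (hVmin : ∀ N : Subgroup G, N.Normal → N ≠ ⊥ → V ≤ N)
    -- `V` is an elementary abelian `p`-group
    (hVab : ∀ x y : V, x * y = y * x) (hVelem : ∀ x : V, x ^ p = 1)
    -- `V` acts regularly on `Ω`
    (hVtrans : MulAction.IsPretransitive V Ω)
    (hVfree : ∀ (v : V) (ω : Ω), v • ω = ω → v = 1)
    (g : G) (hg : g ≠ 1) :
    2 * Nat.card (MulAction.orbitRel.Quotient (Subgroup.zpowers g) Ω) ≤
        n + Nat.card {ω : Ω | g • ω = ω} ∧
      orderOf g * p * Nat.card (MulAction.orbitRel.Quotient (Subgroup.zpowers g) Ω) ≤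
        (p + orderOf g - 1) * n ∧
      4 * Nat.card (MulAction.orbitRel.Quotient (Subgroup.zpowers g) Ω) ≤ 3 * n := by
  classical
  set H := Subgroup.zpowers g with hH
  set o := orderOf g with ho
  set cQ := Nat.card (orbitRel.Quotient H Ω) with hcQ
  have part1 : 2 * cQ ≤ n + Nat.card {ω : Ω | g • ω = ω} := by
    rw [hn]; exact stmt3_two_mul_card_orbits_le g
  have ho2 : 2 ≤ o := by
    have h1 : o ≠ 1 := fun h => hg (orderOf_eq_one_iff.mp h)
    have h0 : 0 < o := orderOf_pos g
    omega
  have hp2 : 2 ≤ p := hp.two_le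
  have part2 : o * p * cQ ≤ (p + o - 1) * n := by
    letI : Fintype Ω := Fintype.ofFinite Ω
    letI : Fintype ↥H := Fintype.ofFinite ↥H
    letI : ∀ a : ↥H, Fintype (fixedBy Ω a) := fun a => Fintype.ofFinite _
    letI : Fintype (orbitRel.Quotient ↥H Ω) := Fintype.ofFinite _
    have hb := MulAction.sum_card_fixedBy_eq_card_orbits_mul_card_group (↥H) Ω
    have hcH : Fintype.card ↥H = o := by
      rw [← Nat.card_eq_fintype_card, hH, Nat.card_zpowers]
    have hfix_le : ∀ a : ↥H, a ≠ 1 → p * Fintype.card (fixedBy Ω a) ≤ n := by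
      intro a ha
      have hane : (a : G) ≠ 1 := fun hcon => ha (Subtype.ext hcon)
      have hbd := stmt3_fix_bound p hp V hVelem hVtrans hVfree (a : G) hane
      rw [hn, ← Nat.card_eq_fintype_card]
      exact hbd
    have hone : Fintype.card (fixedBy Ω (1 : ↥H)) = n := by
      have huniv : fixedBy Ω (1 : ↥H) = Set.univ := by
        ext ω; simp [MulAction.mem_fixedBy]
      have hc : Fintype.card (fixedBy Ω (1 : ↥H)) = Fintype.card Ω :=
        Fintype.card_congr ((Equiv.setCongr huniv).trans (Equiv.Set.univ Ω))
      rw [hc, hn, Nat.card_eq_fintype_card]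
    calc o * p * cQ = p * (cQ * Fintype.card ↥H) := by rw [hcH]; ring
      _ = p * ∑ a : ↥H, Fintype.card (fixedBy Ω a) := by
          rw [hb, hcQ, Nat.card_eq_fintype_card]
      _ = ∑ a : ↥H, p * Fintype.card (fixedBy Ω a) := by rw [Finset.mul_sum]
      _ = p * Fintype.card (fixedBy Ω (1 : ↥H)) +
            ∑ a ∈ Finset.univ.erase (1 : ↥H), p * Fintype.card (fixedBy Ω a) := by
          exact (Finset.add_sum_erase Finset.univ
            (fun a => p * Fintype.card (fixedBy Ω a)) (Finset.mem_univ (1 : ↥H))).symm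
      _ ≤ p * n + ∑ a ∈ Finset.univ.erase (1 : ↥H), n := by
          refine add_le_add (by rw [hone]) (Finset.sum_le_sum fun a ha => ?_)
          exact hfix_le a (Finset.ne_of_mem_erase ha)
      _ = p * n + (o - 1) * n := by
          rw [Finset.sum_const, Finset.card_erase_of_mem (Finset.mem_univ _),
            Finset.card_univ, hcH, smul_eq_mul]
      _ = (p + o - 1) * n := by
          have hx : p + o - 1 = p + (o - 1) := by omega
          rw [hx, add_mul]
  refine ⟨part1, part2, ?_⟩
  have h1 : (o * p) * (4 * cQ) ≤ (o * p) * (3 * n) := by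
    calc (o * p) * (4 * cQ) = 4 * (o * p * cQ) := by ring
      _ ≤ 4 * ((p + o - 1) * n) := Nat.mul_le_mul_left _ part2
      _ = (4 * (p + o - 1)) * n := by ring
      _ ≤ (3 * (o * p)) * n := Nat.mul_le_mul_right _ (stmt3_arith o p ho2 hp2)
      _ = (o * p) * (3 * n) := by ring
  exact Nat.le_of_mul_le_mul_left h1 (by positivity)
end

section
/- Let G be a finite solvable group acting faithfully on a finite set Ω of size n (a solvable permutation group of degree n), and let H be a nilpotent subgroup of G. Then |H| ≤ 2^n. -/
lemma aux_exists_central {G : Type*} [Group G] [Group.IsNilpotent G] [Nontrivial G] :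
    ∃ z ∈ Subgroup.center G, z ≠ 1 := by
  classical
  obtain ⟨n, hn⟩ := nilpotent_iff_lowerCentralSeries.mp ‹_›
  have hex : ∃ k, (⊤ : Subgroup G).lowerCentralSeries k = ⊥ := ⟨n, hn⟩
  have hk : (⊤ : Subgroup G).lowerCentralSeries (Nat.find hex) = ⊥ := Nat.find_spec hex
  have hk0 : Nat.find hex ≠ 0 := by
    intro h
    rw [h, lowerCentralSeries_zero] at hk
    obtain ⟨g, hg⟩ := exists_ne (1 : G)
    have : g ∈ (⊥ : Subgroup G) := hk ▸ Subgroup.mem_top g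
    exact hg (by simpa using this)
  have hprev : (⊤ : Subgroup G).lowerCentralSeries (Nat.find hex - 1) ≠ ⊥ :=
    Nat.find_min hex (by omega)
  rw [show Nat.find hex = Nat.find hex - 1 + 1 from by omega,
    lowerCentralSeries_succ] at hk
  have hle : (⊤ : Subgroup G).lowerCentralSeries (Nat.find hex - 1) ≤ Subgroup.center G := by
    have := Subgroup.commutator_eq_bot_iff_le_centralizer.mp hk
    rwa [Subgroup.coe_top, Subgroup.centralizer_univ] at this
  rw [Ne, Subgroup.eq_bot_iff_forall] at hprev
  push_neg at hprev
  obtain ⟨z, hz, hz1⟩ := hprev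
  exact ⟨z, hle hz, hz1⟩

lemma aux_two_mul_le (c : ℕ) (hc : 1 ≤ c) : 2 * c ≤ 2 ^ c := by
  calc 2 * c ≤ 2 * 2 ^ (c - 1) := by
        have : c - 1 < 2 ^ (c - 1) := Nat.lt_two_pow_self
        omega
    _ = 2 ^ (c - 1 + 1) := (pow_succ' 2 _).symm
    _ = 2 ^ c := by congr 1; omega

universe u

open MulAction in
theorem aux_perm_bound : ∀ (n : ℕ) (Ω : Type u), Finite Ω →
    Nat.card Ω = n → ∀ (H : Subgroup (Equiv.Perm Ω)), Group.IsNilpotent H →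
    Nat.card H ≤ 2 ^ n := by
  intro n
  induction n using Nat.strong_induction_on with
  | _ n IH =>
  intro Ω hfin hΩ H hH
  haveI := hfin
  haveI := hH
  rcases eq_or_ne H ⊥ with rfl | hbot
  · simpa using Nat.one_le_two_pow
  haveI : Nontrivial H := (Subgroup.nontrivial_iff_ne_bot H).mpr hbot
  obtain ⟨z0, hz0c, hz0⟩ := aux_exists_central (G := H)
  set z : Equiv.Perm Ω := (z0 : Equiv.Perm Ω) with hzdef
  have hz : z ≠ 1 := by
    simpa [hzdef] using hz0
  have hcomm : ∀ h : H, Commute z (h : Equiv.Perm Ω) := by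
    intro h
    exact congrArg Subtype.val (Subgroup.mem_center_iff.mp hz0c h).symm
  set Z : Subgroup (Equiv.Perm Ω) := Subgroup.zpowers z with hZdef
  -- every element of H maps Z-orbits to Z-orbits
  have hcompat : ∀ (h : H) (x y : Ω),
      orbitRel Z Ω x y → orbitRel Z Ω (h.val x) (h.val y) := by
    intro h x y hr
    rw [orbitRel_apply, mem_orbit_iff] at hr ⊢
    obtain ⟨⟨w, hw⟩, hwy⟩ := hr
    obtain ⟨j, rfl⟩ := Subgroup.mem_zpowers_iff.mp hw
    refine ⟨⟨z ^ j, Subgroup.zpow_mem _ (Subgroup.mem_zpowers z) j⟩, ?_⟩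
    have hyx : (z ^ j) y = x := hwy
    show (z ^ j) • (h.val y) = h.val x
    calc (z ^ j) • (h.val y) = (z ^ j) (h.val y) := rfl
      _ = h.val ((z ^ j) y) := by
          have := ((hcomm h).zpow_left j).eq
          exact congrFun (congrArg (fun p : Equiv.Perm Ω => (p : Ω → Ω)) this) y
      _ = h.val x := by rw [hyx]
  -- the action of H on the quotient
  let Q := orbitRel.Quotient Z Ω
  haveI : Finite Q := Quotient.finite _
  letI : SMul H Q := ⟨fun h => Quotient.map' (fun x => h.val x) (hcompat h)⟩
  have smul_mk : ∀ (h : H) (x : Ω),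
      h • (Quotient.mk'' x : Q) = Quotient.mk'' (h.val x) := fun _ _ => rfl
  letI : MulAction H Q :=
    { one_smul := by
        intro q
        induction q using Quotient.inductionOn' with
        | h x => simp [smul_mk]
      mul_smul := by
        intro h1 h2 q
        induction q using Quotient.inductionOn' with
        | h x => simp [smul_mk] }
  let φ : H →* Equiv.Perm Q := MulAction.toPermHom H Q
  let K : Subgroup H := φ.ker
  -- card H = card range * card ker
  have hcard : Nat.card H = Nat.card φ.range * Nat.card K := by
    rw [Subgroup.card_eq_card_quotient_mul_card_subgroup K]
    congr 1
    exact Nat.card_congr (QuotientGroup.quotientKerEquivRange φ).toEquiv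
  haveI : Group.IsNilpotent φ.range :=
    nilpotent_of_surjective φ.rangeRestrict φ.rangeRestrict_surjective
  classical
  haveI : Fintype Ω := Fintype.ofFinite Ω
  haveI : Fintype Q := Fintype.ofFinite Q
  -- orbit sizes
  let c : Q → ℕ := fun q => Nat.card q.orbit
  have hc1 : ∀ q : Q, 1 ≤ c q := by
    intro q
    have : q.orbit.Nonempty := by
      induction q using Quotient.inductionOn' with
      | h x => exact ⟨x, orbitRel.Quotient.mem_orbit.mpr rfl⟩
    have : Nonempty q.orbit := this.to_subtype
    exact Nat.card_pos
  have hn_sum : n = ∑ q : Q, c q := by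
    rw [← hΩ, Nat.card_eq_fintype_card, Fintype.card_congr (selfEquivSigmaOrbits' Z Ω),
      Fintype.card_sigma]
    refine Finset.sum_congr rfl fun q _ => ?_
    rw [← Nat.card_eq_fintype_card]
  -- some orbit has size ≥ 2
  have hbig : ∃ q : Q, 2 ≤ c q := by
    obtain ⟨x, hx⟩ : ∃ x : Ω, z x ≠ x := by
      by_contra hall
      push_neg at hall
      exact hz (Equiv.ext hall)
    refine ⟨Quotient.mk'' x, ?_⟩
    have h1 : x ∈ orbitRel.Quotient.orbit (Quotient.mk'' x : Q) :=
      orbitRel.Quotient.mem_orbit.mpr rfl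
    have h2 : z x ∈ orbitRel.Quotient.orbit (Quotient.mk'' x : Q) := by
      rw [orbitRel.Quotient.orbit_mk]
      exact ⟨⟨z, Subgroup.mem_zpowers z⟩, rfl⟩
    have : (orbitRel.Quotient.orbit (Quotient.mk'' x : Q)).Nontrivial := ⟨z x, h2, x, h1, hx⟩
    have := Set.nontrivial_coe_sort.mpr this
    exact Finite.one_lt_card_iff_nontrivial.mpr this
  -- m < n
  set m := Nat.card Q with hm
  have hmn : m < n := by
    obtain ⟨q0, hq0⟩ := hbig
    have hlt : ∑ _q : Q, 1 < ∑ q : Q, c q :=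
      Finset.sum_lt_sum (fun i _ => hc1 i) ⟨q0, Finset.mem_univ q0, by omega⟩
    rw [Finset.sum_const, smul_eq_mul, mul_one, Finset.card_univ] at hlt
    rw [hn_sum, hm, Nat.card_eq_fintype_card]
    exact hlt
  -- kernel bound
  have hker : Nat.card K ≤ ∏ q : Q, c q := by
    have hmem : ∀ (k : K) (q : Q), k.val.val (Quotient.out q) ∈ q.orbit := by
      intro k q
      have hk1 : φ k.val = 1 := k.2
      have hk : k.val • q = q := by
        have := DFunLike.congr_fun hk1 q
        exact this
      nth_rewrite 1 [← Quotient.out_eq' q] at hk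
      rw [smul_mk] at hk
      exact orbitRel.Quotient.mem_orbit.mpr hk
    let ι : K → ∀ q : Q, q.orbit := fun k q => ⟨k.val.val (Quotient.out q), hmem k q⟩
    have hinj : Function.Injective ι := by
      intro k1 k2 he
      have heq : ∀ q : Q, k1.val.val (Quotient.out q) = k2.val.val (Quotient.out q) := by
        intro q
        exact congrArg Subtype.val (congrFun he q)
      ext x
      · -- goal: k1.val.val x = k2.val.val x (after double Subtype ext?)
        set q : Q := Quotient.mk'' x with hq
        have hrel : orbitRel Z Ω x (Quotient.out q) := by
          rw [← Quotient.eq'']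
          exact (Quotient.out_eq' q).symm
        rw [orbitRel_apply, mem_orbit_iff] at hrel
        obtain ⟨⟨w, hw⟩, hwx⟩ := hrel
        obtain ⟨j, rfl⟩ := Subgroup.mem_zpowers_iff.mp hw
        have hx : (z ^ j) (Quotient.out q) = x := hwx
        have comm1 : k1.val.val ((z ^ j) (Quotient.out q))
            = (z ^ j) (k1.val.val (Quotient.out q)) := by
          have := ((hcomm k1.val).zpow_left j).eq.symm
          exact congrFun (congrArg (fun p : Equiv.Perm Ω => (p : Ω → Ω)) this) _
        have comm2 : k2.val.val ((z ^ j) (Quotient.out q))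
            = (z ^ j) (k2.val.val (Quotient.out q)) := by
          have := ((hcomm k2.val).zpow_left j).eq.symm
          exact congrFun (congrArg (fun p : Equiv.Perm Ω => (p : Ω → Ω)) this) _
        calc k1.val.val x = k1.val.val ((z ^ j) (Quotient.out q)) := by rw [hx]
          _ = (z ^ j) (k1.val.val (Quotient.out q)) := comm1
          _ = (z ^ j) (k2.val.val (Quotient.out q)) := by rw [heq q]
          _ = k2.val.val ((z ^ j) (Quotient.out q)) := comm2.symm
          _ = k2.val.val x := by rw [hx]
    calc Nat.card K ≤ Nat.card (∀ q : Q, q.orbit) := Nat.card_le_card_of_injective ι hinj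
      _ = ∏ q : Q, c q := Nat.card_pi
  -- range bound via IH
  have hrange : Nat.card φ.range ≤ 2 ^ m :=
    IH m hmn Q inferInstance rfl φ.range inferInstance
  -- combine
  calc Nat.card H = Nat.card φ.range * Nat.card K := hcard
    _ ≤ 2 ^ m * ∏ q : Q, c q := Nat.mul_le_mul hrange hker
    _ = ∏ q : Q, 2 * c q := by
        rw [Finset.prod_mul_distrib, Finset.prod_const, Finset.card_univ,
          ← Nat.card_eq_fintype_card, ← hm]
    _ ≤ ∏ q : Q, 2 ^ c q := Finset.prod_le_prod' fun q _ => aux_two_mul_le (c q) (hc1 q)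
    _ = 2 ^ (∑ q : Q, c q) := Finset.prod_pow_eq_pow_sum _ _ _
    _ = 2 ^ n := by rw [← hn_sum]

/-- Let `G` be a finite solvable group acting faithfully on a finite set `Ω` of
size `n` (a solvable permutation group of degree `n`), and let `H` be a nilpotent subgroup of
`G`. Then `|H| ≤ 2^n`. -/
theorem stmt_4 {G Ω : Type*} [Group G] [Finite G] [Finite Ω] [MulAction G Ω]
    [FaithfulSMul G Ω]
    (hsolv : IsSolvable G)
    (n : ℕ) (hn : Nat.card Ω = n)
    (H : Subgroup G) (hHnil : Group.IsNilpotent H) :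
    Nat.card H ≤ 2 ^ n := by
  haveI := hHnil
  set f := MulAction.toPermHom G Ω with hf
  have hinj : Function.Injective f := fun a b h => MulAction.toPerm_injective h
  set H' := H.map f with hH'
  have e : H ≃* H' := Subgroup.equivMapOfInjective H f hinj
  have hcard : Nat.card H = Nat.card H' := Nat.card_congr e.toEquiv
  have hnil' : Group.IsNilpotent H' := nilpotent_of_mulEquiv e
  rw [hcard]
  exact aux_perm_bound n Ω ‹Finite Ω› hn H' hnil'
end
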